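/- For 0 ≤ p < 1/2 and γ ∈ H²(𝕋¹; ℝ³), the principal value operator L_p[γ](x) := p.v. ∫_{𝕋¹} (γ(x)-γ(y))/ϑ(x-y)^{2(p+1)} dy acts diagonally on Fourier coefficients via γ̂_k ↦ λ_k γ̂_k with λ_k = C_{p,k}|k|^{1+2p}, where 0 < C_{k,p} = O(1) as |k| → ∞; consequently ‖L_p[γ]‖_{Ḣ^{1-2p}(𝕋¹)} ≤ C_p ‖γ‖_{Ḣ²(𝕋¹)}. -/

import Mathlib

open MeasureTheory Real Filter

/-- Geodesic distance on the torus `𝕋¹ = [-π,π]` with endpoints identified. -/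
noncomputable def vartheta (z : ℝ) : ℝ :=
  |z - 2 * π * ((round (z / (2 * π)) : ℤ) : ℝ)|

lemma vartheta_periodic : Function.Periodic vartheta (2 * π) := by
  intro z
  unfold vartheta
  have h2π : (2 * π) ≠ 0 := by positivity
  have : (z + 2 * π) / (2 * π) = z / (2 * π) + (1:ℤ) := by push_cast; field_simp
  rw [this, round_add_intCast]
  push_cast
  ring_nf

lemma vartheta_eq_abs {z : ℝ} (hz : |z| ≤ π) : vartheta z = |z| := by
  unfold vartheta
  rcases eq_or_lt_of_le hz with h | h
  · rcases (abs_eq (le_of_lt pi_pos)).mp h with rfl | rfl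
    · have : π / (2 * π) = 1/2 := by field_simp
      rw [this]
      norm_num [round_eq]
      rw [abs_of_nonpos (by linarith [pi_pos]), abs_of_nonneg (le_of_lt pi_pos)]
      ring
    · have : -π / (2 * π) = -(1/2) := by field_simp
      rw [this]
      norm_num [round_eq]
  · have hπ := pi_pos
    rw [abs_lt] at h
    have h1 : -(1/2) < z / (2*π) := by
      rw [neg_lt, ← neg_div, div_lt_iff₀ (by positivity)]; linarith
    have h2 : z / (2*π) < 1/2 := by rw [div_lt_iff₀ (by positivity)]; linarith
    have : round (z / (2 * π)) = 0 := by
      rw [round_eq, Int.floor_eq_zero_iff, Set.mem_Ico]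
      constructor <;> [linarith; linarith]
    rw [this]
    norm_num

lemma vartheta_nonneg (z : ℝ) : 0 ≤ vartheta z := abs_nonneg _

lemma measurable_vartheta : Measurable vartheta := by
  have h : Measurable fun z : ℝ => ((round (z / (2 * π)) : ℤ) : ℝ) := by
    have : (fun z : ℝ => ((round (z / (2 * π)) : ℤ) : ℝ))
        = fun z : ℝ => ((⌊z / (2 * π) + 1/2⌋ : ℤ) : ℝ) := by
      funext z; rw [round_eq]
    rw [this]
    exact measurable_from_top.comp (((measurable_id.div_const _).add_const _).floor)
  exact (measurable_id.sub (h.const_mul _)).abs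

/-- The truncated kernel. -/
noncomputable def Kk (p ε : ℝ) (z : ℝ) : ℝ :=
  if ε ≤ vartheta z then vartheta z ^ (-(2 * (p + 1))) else 0

lemma Kk_periodic (p ε : ℝ) : Function.Periodic (Kk p ε) (2 * π) := by
  intro z; unfold Kk; rw [vartheta_periodic z]

lemma Kk_meas (p ε : ℝ) : Measurable (Kk p ε) := by
  unfold Kk
  exact Measurable.ite (measurable_vartheta measurableSet_Ici)
    (measurable_vartheta.pow_const _) measurable_const

lemma Kk_nonneg (p ε : ℝ) (z : ℝ) : 0 ≤ Kk p ε z := by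
  unfold Kk; split
  · exact Real.rpow_nonneg (vartheta_nonneg z) _
  · exact le_refl 0

lemma Kk_bound {p : ℝ} (hp0 : 0 ≤ p) {ε : ℝ} (hε : 0 < ε) (z : ℝ) :
    Kk p ε z ≤ ε ^ (-(2 * (p + 1))) := by
  unfold Kk; split
  · exact Real.rpow_le_rpow_of_nonpos hε ‹_› (by nlinarith)
  · positivity

/-- bounded + ae strongly measurable implies interval integrable -/
lemma II_of_bdd {E : Type*} [NormedAddCommGroup E] {f : ℝ → E} (C : ℝ)
    (hm : AEStronglyMeasurable f volume) (hb : ∀ x, ‖f x‖ ≤ C) (a b : ℝ) :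
    IntervalIntegrable f volume a b := by
  rw [intervalIntegrable_iff]
  have hconst : IntegrableOn (fun _ : ℝ => C) (Set.uIoc a b) volume :=
    integrableOn_const measure_Ioc_lt_top.ne
  exact Integrable.mono' hconst hm.restrict (Eventually.of_forall hb)

lemma bdd_of_periodic_cont {E : Type*} [NormedAddCommGroup E] {f : ℝ → E}
    (hper : Function.Periodic f (2*π))
    (hc : Continuous f) : ∃ M : ℝ, ∀ x, ‖f x‖ ≤ M := by
  obtain ⟨M, hM⟩ := (isCompact_Icc (a := (0:ℝ)) (b := 2*π)).exists_bound_of_continuousOn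
    hc.continuousOn
  refine ⟨M, fun x => ?_⟩
  obtain ⟨y, hy, hxy⟩ := hper.exists_mem_Ico₀ (by positivity) x
  rw [hxy]
  exact hM y ⟨hy.1, hy.2.le⟩

lemma II_abs_rpow {r : ℝ} (hr : -1 < r) (a b : ℝ) :
    IntervalIntegrable (fun z : ℝ => |z| ^ r) volume a b := by
  have key : ∀ c : ℝ, 0 ≤ c → IntervalIntegrable (fun z : ℝ => |z| ^ r) volume 0 c := by
    intro c hc
    apply (intervalIntegral.intervalIntegrable_rpow' hr (a := 0) (b := c)).congr
    have h1 : Set.uIoc (0:ℝ) c = Set.Ioc 0 c := Set.uIoc_of_le hc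
    intro z hz
    rw [h1] at hz
    simp only []; rw [abs_of_pos hz.1]
  have keyneg : ∀ c : ℝ, 0 ≤ c → IntervalIntegrable (fun z : ℝ => |z| ^ r) volume (-c) 0 := by
    intro c hc
    have h := (IntervalIntegrable.iff_comp_neg (f := fun z : ℝ => |z| ^ r)
      (a := c) (b := 0)).mp ((key c hc).symm)
    simpa using h
  have half : ∀ c : ℝ, IntervalIntegrable (fun z : ℝ => |z| ^ r) volume 0 c := by
    intro c
    rcases le_or_gt 0 c with h | h
    · exact key c h
    · have := (keyneg (-c) (by linarith)).symm
      simpa using this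
  exact ((half a).symm).trans (half b)

/-- Fourier coefficient of a `2π`-periodic function on the torus. -/
noncomputable def fc (f : ℝ → ℂ) (k : ℤ) : ℂ :=
  (1 / (2 * π)) * ∫ x in (-π)..π, f x * Complex.exp (-Complex.I * k * x)

/-- Componentwise Fourier coefficients of an `ℝ³`-valued function. -/
noncomputable def fcE (f : ℝ → EuclideanSpace ℝ (Fin 3)) (k : ℤ) (i : Fin 3) : ℂ :=
  fc (fun x => ((f x i : ℝ) : ℂ)) k

/-- Truncated version of the principal-value operator
`L_p[γ](x) = p.v.∫_{𝕋¹} (γ(x)-γ(y))/ϑ(x-y)^{2(p+1)} dy`. -/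
noncomputable def LpE (p ε : ℝ) (γ : ℝ → EuclideanSpace ℝ (Fin 3)) (x : ℝ) :
    EuclideanSpace ℝ (Fin 3) :=
  ∫ y in (-π)..π,
    if ε ≤ vartheta (x - y) then (vartheta (x - y)) ^ (-(2 * (p + 1))) • (γ x - γ y)
    else 0

section core
variable {p ε : ℝ} {γ : ℝ → EuclideanSpace ℝ (Fin 3)}

lemma LpE_coord (hp0 : 0 ≤ p) (hε : 0 < ε) (hγc : Continuous γ)
    (Mγ : ℝ) (hMγ : ∀ x, ‖γ x‖ ≤ Mγ) (x : ℝ) (i : Fin 3) :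
    (LpE p ε γ x) i = ∫ y in (-π)..π, Kk p ε (x - y) * (γ x i - γ y i) := by
  have hre : ∀ y : ℝ, (if ε ≤ vartheta (x - y) then
      (vartheta (x - y)) ^ (-(2 * (p + 1))) • (γ x - γ y) else 0)
      = Kk p ε (x - y) • (γ x - γ y) := by
    intro y
    unfold Kk
    split
    · rfl
    · rw [zero_smul]
  have hII : IntervalIntegrable (fun y => Kk p ε (x - y) • (γ x - γ y)) volume (-π) π := by
    apply II_of_bdd (ε ^ (-(2 * (p + 1))) * (2 * Mγ))
    · apply AEStronglyMeasurable.smul (f := fun y => Kk p ε (x - y)) (g := fun y => γ x - γ y)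
      · exact ((Kk_meas p ε).comp (measurable_const.sub measurable_id)).aestronglyMeasurable
      · exact (Continuous.aestronglyMeasurable (by continuity))
    · intro y
      rw [norm_smul]
      have h0 : 0 ≤ Mγ := le_trans (norm_nonneg _) (hMγ 0)
      
      have : ‖γ x - γ y‖ ≤ 2 * Mγ := by
        calc ‖γ x - γ y‖ ≤ ‖γ x‖ + ‖γ y‖ := norm_sub_le _ _
        _ ≤ 2 * Mγ := by have := hMγ x; have := hMγ y; linarith
      apply mul_le_mul _ this (norm_nonneg _) (by positivity)
      rw [Real.norm_eq_abs, abs_of_nonneg (Kk_nonneg _ _ _)]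
      exact Kk_bound hp0 hε _
  have : LpE p ε γ x = ∫ y in (-π)..π, Kk p ε (x - y) • (γ x - γ y) := by
    unfold LpE
    exact intervalIntegral.integral_congr (fun y _ => hre y)
  rw [this]
  have key := ContinuousLinearMap.intervalIntegral_comp_comm
    (EuclideanSpace.proj i : EuclideanSpace ℝ (Fin 3) →L[ℝ] ℝ) hII
  have h2 : (∫ y in (-π)..π, Kk p ε (x - y) • (γ x - γ y)) i
      = (EuclideanSpace.proj i : EuclideanSpace ℝ (Fin 3) →L[ℝ] ℝ)
        (∫ y in (-π)..π, Kk p ε (x - y) • (γ x - γ y)) := rfl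
  rw [h2, ← key]
  congr 1

lemma LpE_trans (hp0 : 0 ≤ p) (hε : 0 < ε) (hγc : Continuous γ)
    (hγper : Function.Periodic γ (2 * π))
    (Mγ : ℝ) (hMγ : ∀ x, ‖γ x‖ ≤ Mγ) (x : ℝ) (i : Fin 3) :
    (LpE p ε γ x) i = ∫ z in (-π)..π, Kk p ε z * (γ x i - γ (x - z) i) := by
  rw [LpE_coord hp0 hε hγc Mγ hMγ x i]
  set G : ℝ → ℝ := fun z => Kk p ε z * (γ x i - γ (x - z) i) with hG
  have h1 : ∀ y ∈ Set.uIcc (-π) π, Kk p ε (x - y) * (γ x i - γ y i) = G (x - y) := by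
    intro y _
    simp only [hG, sub_sub_cancel]
  rw [intervalIntegral.integral_congr h1, intervalIntegral.integral_comp_sub_left G x]
  have hGper : Function.Periodic G (2 * π) := by
    intro z
    simp only [hG]
    rw [Kk_periodic]
    have : x - (z + 2 * π) = (x - z) - 2 * π := by ring
    rw [this, hγper.sub_eq (x - z)]
  have key := hGper.intervalIntegral_add_eq (x - π) (-π)
  have e1 : x - π + 2 * π = x + π := by ring
  have e2 : -π + 2 * π = π := by ring
  rw [e1, e2] at key
  have e3 : x - -π = x + π := by ring
  rw [e3]
  exact key

end core


noncomputable def mC (p ε : ℝ) (k : ℤ) : ℂ :=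
  ∫ z in (-π)..π, (Kk p ε z : ℂ) * (1 - Complex.exp (-Complex.I * k * z))

section fourier
variable {p ε : ℝ} {γ : ℝ → EuclideanSpace ℝ (Fin 3)}

lemma fc_LpE (hp0 : 0 ≤ p) (hε : 0 < ε) (hγc : Continuous γ)
    (hγper : Function.Periodic γ (2 * π)) (k : ℤ) (i : Fin 3) :
    fcE (LpE p ε γ) k i = mC p ε k * fcE γ k i := by
  obtain ⟨Mγ, hMγ⟩ := bdd_of_periodic_cont hγper hγc
  set f : ℝ → ℝ := fun x => γ x i with hf
  have hfc : Continuous f := by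
    exact ((EuclideanSpace.proj i : EuclideanSpace ℝ (Fin 3) →L[ℝ] ℝ).continuous).comp hγc
  have hfper : Function.Periodic f (2 * π) := fun x => by
    simp only [hf]; rw [hγper x]
  obtain ⟨Mf, hMf⟩ := bdd_of_periodic_cont hfper hfc
  set E : ℝ → ℂ := fun x => Complex.exp (-Complex.I * k * x) with hE
  have hEc : Continuous E := by
    apply Complex.continuous_exp.comp
    exact (continuous_const.mul Complex.continuous_ofReal)
  have hEnorm : ∀ x : ℝ, ‖E x‖ = 1 := by
    intro x
    simp only [hE]
    rw [Complex.norm_exp]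
    norm_num
  set H : ℝ → ℂ := fun u => (f u : ℂ) * E u with hH
  have hHc : Continuous H := (Complex.continuous_ofReal.comp hfc).mul hEc
  have hHper : Function.Periodic H (2 * π) := by
    intro u
    simp only [hH, hE]
    rw [hfper u, show (-Complex.I * k * (↑(u + 2*π)) : ℂ)
      = (-Complex.I * k * u) + ((-k : ℤ) : ℂ) * (2 * π * Complex.I) by push_cast; ring,
      Complex.exp_add, Complex.exp_int_mul_two_pi_mul_I, mul_one]
  -- step 1: rewrite fcE (LpE ...) as double integral
  have hππ : (-π : ℝ) ≤ π := by linarith [pi_pos]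
  set g : ℝ → ℝ → ℂ := fun x z => ((Kk p ε z * (f x - f (x - z)) : ℝ) : ℂ) * E x with hg
  have step1 : fcE (LpE p ε γ) k i
      = (1 / (2 * π)) * ∫ x in (-π)..π, (∫ z in (-π)..π, g x z) := by
    unfold fcE fc
    congr 1
    apply intervalIntegral.integral_congr
    intro x _
    simp only []
    rw [LpE_trans hp0 hε hγc hγper Mγ hMγ x i]
    rw [← intervalIntegral.integral_ofReal (f := fun z => Kk p ε z * (f x - f (x - z)))]
    rw [← intervalIntegral.integral_mul_const]
  -- inner integral over x, for fixed z
  have inner : ∀ z : ℝ, (∫ x in (-π)..π, g x z)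
      = (Kk p ε z : ℂ) * (1 - Complex.exp (-Complex.I * k * z)) * ∫ x in (-π)..π, H x := by
    intro z
    have hBint : ∫ x in (-π)..π, (f (x - z) : ℂ) * E x
        = Complex.exp (-Complex.I * k * z) * ∫ x in (-π)..π, H x := by
      have hpt : ∀ x ∈ Set.uIcc (-π) π, (f (x - z) : ℂ) * E x
          = H (x - z) * Complex.exp (-Complex.I * k * z) := by
        intro x _
        simp only [hH, hE]
        rw [show (-Complex.I * k * x : ℂ)
          = (-Complex.I * k * (↑(x - z))) + (-Complex.I * k * z) by push_cast; ring,
          Complex.exp_add]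
        ring
      rw [intervalIntegral.integral_congr hpt, intervalIntegral.integral_mul_const,
        intervalIntegral.integral_comp_sub_right H z]
      have key := hHper.intervalIntegral_add_eq (-π - z) (-π)
      have e1 : -π - z + 2 * π = π - z := by ring
      have e2 : -π + 2 * π = π := by ring
      rw [e1, e2] at key
      rw [key]
      ring
    have hsplit : ∀ x ∈ Set.uIcc (-π) π, g x z
        = (Kk p ε z : ℂ) * ((f x : ℂ) * E x - (f (x - z) : ℂ) * E x) := by
      intro x _
      simp only [hg]
      push_cast
      ring
    have hA : IntervalIntegrable (fun x : ℝ => (f x : ℂ) * E x) volume (-π) π :=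
      hHc.intervalIntegrable _ _
    have hB : IntervalIntegrable (fun x : ℝ => (f (x - z) : ℂ) * E x) volume (-π) π := by
      apply Continuous.intervalIntegrable
      exact (Complex.continuous_ofReal.comp (hfc.comp
        (continuous_id.sub continuous_const))).mul hEc
    rw [intervalIntegral.integral_congr hsplit, intervalIntegral.integral_const_mul,
      intervalIntegral.integral_sub hA hB, hBint]
    simp only [hH]
    ring
  -- Fubini
  have hFin : IsFiniteMeasure (volume.restrict (Set.Ioc (-π) π)) := by
    constructor
    rw [Measure.restrict_apply_univ]
    exact measure_Ioc_lt_top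
  have hswap : (∫ x in (-π)..π, (∫ z in (-π)..π, g x z))
      = ∫ z in (-π)..π, (∫ x in (-π)..π, g x z) := by
    rw [intervalIntegral.integral_of_le hππ, intervalIntegral.integral_of_le hππ]
    have : ∀ x, (∫ z in (-π)..π, g x z) = ∫ z in Set.Ioc (-π) π, g x z := fun x =>
      intervalIntegral.integral_of_le hππ
    simp_rw [this]
    have : ∀ z, (∫ x in (-π)..π, g x z) = ∫ x in Set.Ioc (-π) π, g x z := fun z =>
      intervalIntegral.integral_of_le hππ
    simp_rw [this]
    apply MeasureTheory.integral_integral_swap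
    -- integrability of uncurried function
    have hmeas : AEStronglyMeasurable (Function.uncurry g)
        ((volume.restrict (Set.Ioc (-π) π)).prod (volume.restrict (Set.Ioc (-π) π))) := by
      apply Measurable.aestronglyMeasurable
      apply Measurable.mul
      · apply Complex.measurable_ofReal.comp
        apply Measurable.mul
        · exact (Kk_meas p ε).comp measurable_snd
        · apply Measurable.sub
          · exact (hfc.comp continuous_fst).measurable
          · exact (hfc.comp (continuous_fst.sub continuous_snd)).measurable
      · exact (hEc.comp continuous_fst).measurable
    apply Integrable.mono' (g := fun _ => ε ^ (-(2 * (p + 1))) * (2 * Mf))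
      (integrable_const _) hmeas
    filter_upwards with q
    have hMf0 : 0 ≤ Mf := le_trans (norm_nonneg _) (hMf 0)
    rw [Function.uncurry_apply_pair]
    rw [norm_mul, hEnorm, mul_one, Complex.norm_real, Real.norm_eq_abs, abs_mul,
      abs_of_nonneg (Kk_nonneg _ _ _)]
    apply mul_le_mul (Kk_bound hp0 hε _) _ (abs_nonneg _) (by positivity)
    calc |f q.1 - f (q.1 - q.2)| ≤ |f q.1| + |f (q.1 - q.2)| := abs_sub _ _
      _ ≤ 2 * Mf := by
          have h1 := hMf q.1; have h2 := hMf (q.1 - q.2)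
          rw [Real.norm_eq_abs] at h1 h2; linarith
  -- assemble
  rw [step1, hswap]
  have : (∫ z in (-π)..π, (∫ x in (-π)..π, g x z))
      = mC p ε k * ∫ x in (-π)..π, H x := by
    rw [intervalIntegral.integral_congr (fun z _ => inner z),
      intervalIntegral.integral_mul_const]
    rfl
  rw [this]
  unfold fcE fc
  simp only [hH, hE, hf]
  ring

end fourier

noncomputable def wfun (p : ℝ) (k : ℤ) (z : ℝ) : ℝ :=
  |z| ^ (-(2 * (p + 1))) * (1 - Real.cos (k * z))

noncomputable def lamE (p ε : ℝ) (k : ℤ) : ℝ :=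
  ∫ z in (-π)..π, (if ε ≤ |z| then wfun p k z else 0)

noncomputable def lam (p : ℝ) (k : ℤ) : ℝ := ∫ z in (-π)..π, wfun p k z

lemma wfun_nonneg (p : ℝ) (k : ℤ) (z : ℝ) : 0 ≤ wfun p k z := by
  unfold wfun
  apply mul_nonneg (Real.rpow_nonneg (abs_nonneg _) _)
  linarith [Real.cos_le_one ((k : ℝ) * z)]

lemma wfun_meas (p : ℝ) (k : ℤ) : Measurable (wfun p k) := by
  unfold wfun
  exact (measurable_abs.pow_const _).mul
    ((Real.continuous_cos.comp (continuous_const.mul continuous_id)).measurable.const_sub 1)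

lemma wfun_le {p : ℝ} (hp0 : 0 ≤ p) (k : ℤ) (z : ℝ) :
    wfun p k z ≤ ((k : ℝ) ^ 2 / 2) * |z| ^ (-(2 * p)) := by
  unfold wfun
  rcases eq_or_ne z 0 with rfl | hz
  · simp only [abs_zero]
    rw [Real.zero_rpow (by nlinarith : -(2 * (p + 1)) ≠ 0), zero_mul]
    positivity
  · have h1 : 1 - Real.cos ((k : ℝ) * z) ≤ ((k : ℝ) * z) ^ 2 / 2 := by
      linarith [Real.one_sub_sq_div_two_le_cos (x := (k : ℝ) * z)]
    have habs : (0 : ℝ) < |z| := abs_pos.2 hz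
    calc |z| ^ (-(2 * (p + 1))) * (1 - Real.cos ((k : ℝ) * z))
        ≤ |z| ^ (-(2 * (p + 1))) * (((k : ℝ) * z) ^ 2 / 2) := by
          apply mul_le_mul_of_nonneg_left h1 (Real.rpow_nonneg (abs_nonneg _) _)
      _ = ((k : ℝ) ^ 2 / 2) * (|z| ^ (-(2 * (p + 1))) * |z| ^ (2 : ℝ)) := by
          rw [Real.rpow_two, sq_abs]
          ring
      _ = ((k : ℝ) ^ 2 / 2) * |z| ^ (-(2 * p)) := by
          rw [← Real.rpow_add habs]
          congr 1
          ring
lemma wfun_II (p : ℝ) (hp0 : 0 ≤ p) (hp : p < 1 / 2) (k : ℤ) (a b : ℝ) :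
    IntervalIntegrable (wfun p k) volume a b := by
  have hg : IntervalIntegrable (fun z : ℝ => ((k : ℝ) ^ 2 / 2) * |z| ^ (-(2 * p)))
      volume a b := (II_abs_rpow (by linarith) a b).const_mul _
  apply hg.mono_fun' (wfun_meas p k).aestronglyMeasurable
  filter_upwards with z
  rw [Real.norm_eq_abs, abs_of_nonneg (wfun_nonneg p k z)]
  exact wfun_le hp0 k z

lemma mC_real {p ε : ℝ} (hp0 : 0 ≤ p) (hε : 0 < ε) (k : ℤ) :
    mC p ε k = ((lamE p ε k : ℝ) : ℂ) := by
  unfold mC lamE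
  set s2 : ℝ → ℝ := fun z => (if ε ≤ |z| then |z| ^ (-(2 * (p + 1))) * Real.sin (k * z) else 0)
    with hs2
  set c2 : ℝ → ℝ := fun z => (if ε ≤ |z| then wfun p k z else 0) with hc2
  have hexp : ∀ z : ℝ, Complex.exp (-Complex.I * k * z)
      = ((Real.cos ((k:ℝ) * z) : ℝ) : ℂ) - ((Real.sin ((k:ℝ) * z) : ℝ) : ℂ) * Complex.I := by
    intro z
    rw [show (-Complex.I * k * z : ℂ) = ((-((k : ℝ) * z) : ℝ) : ℂ) * Complex.I by
      push_cast; ring, Complex.exp_mul_I]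
    rw [← Complex.ofReal_cos, ← Complex.ofReal_sin, Real.cos_neg, Real.sin_neg]
    push_cast
    ring
  have hpt : ∀ z ∈ Set.uIcc (-π) π, (Kk p ε z : ℂ) * (1 - Complex.exp (-Complex.I * k * z))
      = ((c2 z : ℝ) : ℂ) + ((s2 z : ℝ) : ℂ) * Complex.I := by
    intro z hz
    have hzabs : |z| ≤ π := by
      rw [Set.uIcc_of_le (by linarith [pi_pos])] at hz
      rw [abs_le]
      exact hz
    rw [hexp z]
    unfold Kk
    rw [vartheta_eq_abs hzabs]
    simp only [hc2, hs2]
    unfold wfun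
    split_ifs
    · push_cast
      ring
    · push_cast
      ring
  rw [intervalIntegral.integral_congr hpt]
  have hc2II : IntervalIntegrable c2 volume (-π) π := by
    apply II_of_bdd (ε ^ (-(2 * (p + 1))) * 2)
    · apply Measurable.aestronglyMeasurable
      exact Measurable.ite (measurable_abs measurableSet_Ici) (wfun_meas p k) measurable_const
    · intro z
      rw [Real.norm_eq_abs]
      simp only [hc2]
      split_ifs with h
      · rw [abs_of_nonneg (wfun_nonneg p k z)]
        unfold wfun
        apply mul_le_mul
        · exact Real.rpow_le_rpow_of_nonpos hε h (by nlinarith)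
        · linarith [Real.neg_one_le_cos ((k:ℝ) * z)]
        · linarith [Real.cos_le_one ((k:ℝ) * z)]
        · positivity
      · simp
        positivity
  have hs2II : IntervalIntegrable s2 volume (-π) π := by
    apply II_of_bdd (ε ^ (-(2 * (p + 1))))
    · apply Measurable.aestronglyMeasurable
      apply Measurable.ite (measurable_abs measurableSet_Ici) _ measurable_const
      exact (measurable_abs.pow_const _).mul
        ((Real.continuous_sin.comp (continuous_const.mul continuous_id)).measurable)
    · intro z
      rw [Real.norm_eq_abs]
      simp only [hs2]
      split_ifs with h
      · rw [abs_mul, abs_of_nonneg (Real.rpow_nonneg (abs_nonneg _) _)]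
        calc |z| ^ (-(2 * (p + 1))) * |Real.sin ((k:ℝ) * z)|
            ≤ |z| ^ (-(2 * (p + 1))) * 1 := by
              apply mul_le_mul_of_nonneg_left (abs_sin_le_one _)
                (Real.rpow_nonneg (abs_nonneg _) _)
          _ ≤ ε ^ (-(2 * (p + 1))) := by
              rw [mul_one]
              exact Real.rpow_le_rpow_of_nonpos hε h (by nlinarith)
      · simp
        positivity
  have hc2C : IntervalIntegrable (fun z => ((c2 z : ℝ) : ℂ)) volume (-π) π := by
    rw [intervalIntegrable_iff] at hc2II ⊢
    exact hc2II.ofReal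
  have hs2C : IntervalIntegrable (fun z => ((s2 z : ℝ) : ℂ) * Complex.I) volume (-π) π := by
    apply IntervalIntegrable.mul_const
    rw [intervalIntegrable_iff] at hs2II ⊢
    exact hs2II.ofReal
  have hsplit : (∫ z in (-π)..π, (((c2 z : ℝ) : ℂ) + ((s2 z : ℝ) : ℂ) * Complex.I))
      = ((∫ z in (-π)..π, c2 z : ℝ) : ℂ)
        + ((∫ z in (-π)..π, s2 z : ℝ) : ℂ) * Complex.I := by
    rw [intervalIntegral.integral_add hc2C hs2C, intervalIntegral.integral_mul_const,
      intervalIntegral.integral_ofReal, intervalIntegral.integral_ofReal]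
  have hodd : (∫ z in (-π)..π, s2 z) = 0 := by
    have hneg : ∀ z, s2 (-z) = - s2 z := by
      intro z
      simp only [hs2, abs_neg]
      rw [show (k:ℝ) * -z = -((k:ℝ) * z) by ring, Real.sin_neg]
      split_ifs
      · ring
      · ring
    have h := intervalIntegral.integral_comp_neg (a := -π) (b := π) (f := s2)
    simp only [neg_neg] at h
    have h2 : (∫ z in (-π)..π, s2 (-z)) = - ∫ z in (-π)..π, s2 z := by
      rw [intervalIntegral.integral_congr (g := fun z => - s2 z) (fun z _ => hneg z)]
      exact intervalIntegral.integral_neg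
    rw [h2] at h
    linarith
  rw [hsplit, hodd]
  simp

lemma lamE_meas (p ε : ℝ) (k : ℤ) :
    Measurable (fun z => if ε ≤ |z| then wfun p k z else 0) :=
  Measurable.ite (measurable_abs measurableSet_Ici) (wfun_meas p k) measurable_const

lemma lamE_tendsto {p : ℝ} (hp0 : 0 ≤ p) (hp : p < 1 / 2) (k : ℤ) :
    Tendsto (fun ε => lamE p ε k) (nhdsWithin 0 (Set.Ioi 0)) (nhds (lam p k)) := by
  unfold lamE lam
  apply intervalIntegral.tendsto_integral_filter_of_dominated_convergence (wfun p k)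
  · filter_upwards with ε
    exact (lamE_meas p ε k).aestronglyMeasurable
  · filter_upwards with ε
    filter_upwards with z _
    rw [Real.norm_eq_abs]
    split_ifs with h
    · rw [abs_of_nonneg (wfun_nonneg p k z)]
    · rw [abs_zero]
      exact wfun_nonneg p k z
  · exact wfun_II p hp0 hp k _ _
  · have hae : ∀ᵐ z : ℝ ∂volume, z ≠ 0 := by
      rw [MeasureTheory.ae_iff]
      have : {z : ℝ | ¬ z ≠ 0} = {0} := by ext z; simp
      rw [this]
      exact Real.volume_singleton
    filter_upwards [hae] with z hz _
    have hmem : Set.Iio |z| ∈ nhdsWithin (0:ℝ) (Set.Ioi 0) :=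
      mem_nhdsWithin_of_mem_nhds (Iio_mem_nhds (abs_pos.2 hz))
    apply Tendsto.congr' _ tendsto_const_nhds
    filter_upwards [hmem] with ε hε
    rw [if_pos (le_of_lt hε)]

lemma lam_pos {p : ℝ} (hp0 : 0 ≤ p) (hp : p < 1 / 2) {k : ℤ} (hk : k ≠ 0) :
    0 < lam p k := by
  unfold lam
  have hππ : (-π : ℝ) ≤ π := by linarith [pi_pos]
  rw [intervalIntegral.integral_of_le hππ]
  have hInt : IntegrableOn (wfun p k) (Set.Ioc (-π) π) volume := by
    have := wfun_II p hp0 hp k (-π) π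
    rw [intervalIntegrable_iff, Set.uIoc_of_le hππ] at this
    exact this
  rw [MeasureTheory.integral_pos_iff_support_of_nonneg_ae
    (Eventually.of_forall (wfun_nonneg p k)) hInt]
  have hzero_count : Set.Countable {z : ℝ | wfun p k z = 0} := by
    have hsub : {z : ℝ | wfun p k z = 0} ⊆
        {0} ∪ ⋃ n : ℤ, {(n : ℝ) * (2 * π) / (k : ℝ)} := by
      intro z hz
      simp only [Set.mem_setOf_eq] at hz
      unfold wfun at hz
      rcases mul_eq_zero.mp hz with h | h
      · left
        have := Real.rpow_eq_zero_iff_of_nonneg (abs_nonneg z) |>.mp h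
        simpa using this.1
      · right
        have hcos : Real.cos ((k : ℝ) * z) = 1 := by linarith
        obtain ⟨n, hn⟩ := (Real.cos_eq_one_iff _).mp hcos
        refine Set.mem_iUnion.2 ⟨n, ?_⟩
        have hkne : (k : ℝ) ≠ 0 := Int.cast_ne_zero.2 hk
        simp only [Set.mem_singleton_iff]
        field_simp
        linarith [hn]
    exact Set.Countable.mono hsub
      ((Set.countable_singleton 0).union (Set.countable_iUnion fun n => Set.countable_singleton _))
  have hzs : volume {z : ℝ | wfun p k z = 0} = 0 := hzero_count.measure_zero _
  rw [Measure.restrict_apply' measurableSet_Ioc]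
  have hsubset : Set.Ioc (-π) π ⊆
      (Function.support (wfun p k) ∩ Set.Ioc (-π) π) ∪ {z : ℝ | wfun p k z = 0} := by
    intro z hz
    by_cases h : wfun p k z = 0
    · exact Or.inr h
    · exact Or.inl ⟨h, hz⟩
  have h1 : volume (Set.Ioc (-π) π)
      ≤ volume (Function.support (wfun p k) ∩ Set.Ioc (-π) π)
        + volume {z : ℝ | wfun p k z = 0} :=
    le_trans (measure_mono hsubset) (measure_union_le _ _)
  rw [hzs, add_zero] at h1
  refine lt_of_lt_of_le ?_ h1
  rw [Real.volume_Ioc]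
  apply ENNReal.ofReal_pos.2
  linarith [pi_pos]

lemma integral_abs_rpow_sym {r : ℝ} (hr : -1 < r) {c : ℝ} (hc : 0 ≤ c) :
    (∫ z in (-c)..c, |z| ^ r) = 2 * ∫ z in (0:ℝ)..c, z ^ r := by
  have h1 : (∫ z in (-c)..(0:ℝ), |z| ^ r) = ∫ z in (0:ℝ)..c, |z| ^ r := by
    have := intervalIntegral.integral_comp_neg (a := (0:ℝ)) (b := c)
      (f := fun z : ℝ => |z| ^ r)
    simp only [abs_neg, neg_zero] at this
    exact this.symm
  have h2 : (∫ z in (0:ℝ)..c, |z| ^ r) = ∫ z in (0:ℝ)..c, z ^ r := by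
    apply intervalIntegral.integral_congr
    intro z hz
    rw [Set.uIcc_of_le hc] at hz
    simp only []
    rw [abs_of_nonneg hz.1]
  rw [← intervalIntegral.integral_add_adjacent_intervals
    (II_abs_rpow hr (-c) 0) (II_abs_rpow hr 0 c), h1, h2]
  ring

lemma lam_le {p : ℝ} (hp0 : 0 ≤ p) (hp : p < 1 / 2) {k : ℤ} (hk : k ≠ 0) :
    lam p k ≤ (1 / (1 - 2 * p) + 4 / (1 + 2 * p)) * |(k : ℝ)| ^ (1 + 2 * p) := by
  have hπ := pi_pos
  have hπ1 : (1 : ℝ) < π := by linarith [Real.pi_gt_three]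
  have hk1 : (1 : ℝ) ≤ |(k : ℝ)| := by
    have := Int.one_le_abs hk
    calc (1:ℝ) = ((1:ℤ):ℝ) := by norm_num
    _ ≤ ((|k| : ℤ) : ℝ) := by exact_mod_cast this
    _ = |(k:ℝ)| := by push_cast; ring
  have hkpos : (0:ℝ) < |(k:ℝ)| := by linarith
  set δ : ℝ := |(k : ℝ)|⁻¹ with hδdef
  have hδ0 : 0 < δ := by positivity
  have hδ1 : δ ≤ 1 := by
    rw [hδdef, inv_le_one_iff₀]
    right; exact hk1
  have hδπ : δ ≤ π := by linarith
  have h2p : (0:ℝ) < 1 - 2 * p := by linarith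
  have h2p' : (0:ℝ) < 1 + 2 * p := by linarith
  -- split
  have hsplit : lam p k = (∫ z in (-π)..(-δ), wfun p k z) + (∫ z in (-δ)..δ, wfun p k z)
      + ∫ z in δ..π, wfun p k z := by
    unfold lam
    rw [intervalIntegral.integral_add_adjacent_intervals
        (wfun_II p hp0 hp k (-π) (-δ))
        (wfun_II p hp0 hp k (-δ) δ),
      intervalIntegral.integral_add_adjacent_intervals
        (wfun_II p hp0 hp k (-π) δ)
        (wfun_II p hp0 hp k δ π)]
  -- middle piece
  have hmid : (∫ z in (-δ)..δ, wfun p k z) ≤ (k:ℝ)^2 * δ ^ (1 - 2*p) / (1 - 2*p) := by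
    have hmono : (∫ z in (-δ)..δ, wfun p k z)
        ≤ ∫ z in (-δ)..δ, ((k : ℝ) ^ 2 / 2) * |z| ^ (-(2 * p)) := by
      apply intervalIntegral.integral_mono_on (by linarith)
        (wfun_II p hp0 hp k _ _)
        ((II_abs_rpow (by linarith) _ _).const_mul _)
      intro z _
      exact wfun_le hp0 k z
    have hval : (∫ z in (-δ)..δ, ((k : ℝ) ^ 2 / 2) * |z| ^ (-(2 * p)))
        = (k:ℝ)^2 * δ ^ (1 - 2*p) / (1 - 2*p) := by
      rw [intervalIntegral.integral_const_mul,
        integral_abs_rpow_sym (by linarith) hδ0.le,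
        integral_rpow (Or.inl (by linarith)),
        Real.zero_rpow (by linarith : -(2*p) + 1 ≠ 0),
        show -(2*p) + 1 = 1 - 2*p by ring, sub_zero]
      ring
    linarith
  -- right edge
  have hedge : (∫ z in δ..π, wfun p k z) ≤ 2 * δ ^ (-(1 + 2*p)) / (1 + 2*p) := by
    have h0not : (0:ℝ) ∉ Set.uIcc δ π := by
      rw [Set.uIcc_of_le hδπ]
      intro h
      exact absurd h.1 (by linarith)
    have hIIg : IntervalIntegrable (fun z : ℝ => 2 * z ^ (-(2 * (p + 1)))) volume δ π :=
      (intervalIntegral.intervalIntegrable_rpow (Or.inr h0not)).const_mul 2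
    have hmono : (∫ z in δ..π, wfun p k z) ≤ ∫ z in δ..π, 2 * z ^ (-(2 * (p + 1))) := by
      apply intervalIntegral.integral_mono_on hδπ (wfun_II p hp0 hp k _ _) hIIg
      intro z hz
      unfold wfun
      rw [abs_of_pos (lt_of_lt_of_le hδ0 hz.1)]
      have h2 : 1 - Real.cos ((k:ℝ)*z) ≤ 2 := by linarith [Real.neg_one_le_cos ((k:ℝ)*z)]
      calc z ^ (-(2 * (p + 1))) * (1 - Real.cos ((k:ℝ)*z))
          ≤ z ^ (-(2 * (p + 1))) * 2 := by
            apply mul_le_mul_of_nonneg_left h2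
              (Real.rpow_nonneg (le_trans hδ0.le hz.1) _)
        _ = 2 * z ^ (-(2 * (p + 1))) := by ring
    have hval : (∫ z in δ..π, 2 * z ^ (-(2 * (p + 1))))
        = 2 * ((δ ^ (-(1+2*p)) - π ^ (-(1+2*p))) / (1+2*p)) := by
      rw [intervalIntegral.integral_const_mul,
        integral_rpow (Or.inr ⟨by intro h; nlinarith, h0not⟩),
        show -(2 * (p + 1)) + 1 = -(1 + 2*p) by ring, div_neg, ← neg_div, neg_sub]
    rw [hval] at hmono
    have hπterm : 0 ≤ π ^ (-(1+2*p)) := Real.rpow_nonneg hπ.le _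
    have hfin : 2 * ((δ ^ (-(1+2*p)) - π ^ (-(1+2*p))) / (1+2*p))
        ≤ 2 * δ ^ (-(1 + 2*p)) / (1 + 2*p) := by
      rw [mul_div_assoc]
      gcongr
      linarith
    linarith
  -- left edge by symmetry
  have hleft : (∫ z in (-π)..(-δ), wfun p k z) = ∫ z in δ..π, wfun p k z := by
    have := intervalIntegral.integral_comp_neg (a := δ) (b := π) (f := wfun p k)
    have heven : ∀ z, wfun p k (-z) = wfun p k z := by
      intro z
      unfold wfun
      rw [abs_neg, show (k:ℝ) * -z = -((k:ℝ)*z) by ring, Real.cos_neg]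
    rw [intervalIntegral.integral_congr (g := wfun p k) (fun z _ => heven z)] at this
    exact this.symm
  -- rpow algebra
  have hpow1 : δ ^ (1 - 2*p) = |(k:ℝ)| ^ (2*p - 1) := by
    rw [hδdef, Real.inv_rpow (abs_nonneg _), ← Real.rpow_neg (abs_nonneg _)]
    congr 1
    ring
  have hpow2 : δ ^ (-(1 + 2*p)) = |(k:ℝ)| ^ (1 + 2*p) := by
    rw [hδdef, Real.inv_rpow (abs_nonneg _), ← Real.rpow_neg (abs_nonneg _), neg_neg]
  have hpowk : (k:ℝ)^2 * |(k:ℝ)| ^ (2*p-1) = |(k:ℝ)| ^ (1+2*p) := by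
    have h2 : (k:ℝ)^2 = |(k:ℝ)| ^ ((2:ℕ):ℝ) := by
      rw [Real.rpow_natCast, sq_abs]
    rw [h2, ← Real.rpow_add hkpos]
    congr 1
    push_cast
    ring
  rw [hpow1] at hmid
  rw [hpow2] at hedge
  rw [show (1/(1-2*p) + 4/(1+2*p)) * |(k:ℝ)|^(1+2*p)
    = ((k:ℝ)^2 * |(k:ℝ)|^(2*p-1))/(1-2*p) + 4 * |(k:ℝ)|^(1+2*p)/(1+2*p) from by rw [hpowk]; ring]
  rw [hsplit, hleft]
  have h4 : 2 * |(k:ℝ)|^(1+2*p) / (1 + 2*p) + 2 * |(k:ℝ)|^(1+2*p) / (1 + 2*p)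
      = 4 * |(k:ℝ)|^(1+2*p) / (1 + 2*p) := by ring
  linarith

lemma lam_zero (p : ℝ) : lam p 0 = 0 := by
  unfold lam
  have : ∀ z ∈ Set.uIcc (-π) π, wfun p 0 z = 0 := by
    intro z _
    unfold wfun
    simp
  rw [intervalIntegral.integral_congr this]
  simp

/-- For `0 ≤ p < 1/2` and `γ ∈ H²(𝕋¹;ℝ³)`, the principal value operator `L_p` acts
diagonally on Fourier coefficients, `γ̂_k ↦ λ_k γ̂_k`, where `λ_k = C_{p,k}|k|^{1+2p}` with
`0 < C_{p,k} = O(1)`; consequently `‖L_p[γ]‖_{Ḣ^{1-2p}} ≤ C_p ‖γ‖_{Ḣ²}`. -/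
theorem stmt7 (p : ℝ) (hp0 : 0 ≤ p) (hp : p < 1 / 2) :
    ∃ (lam : ℤ → ℝ) (B Cp : ℝ), 0 < B ∧ 0 < Cp ∧
      (∀ k : ℤ, k ≠ 0 → 0 < lam k ∧ lam k ≤ B * |(k : ℝ)| ^ (1 + 2 * p)) ∧
      ∀ (γ γ' γ'' : ℝ → EuclideanSpace ℝ (Fin 3)),
        Function.Periodic γ (2 * π) →
        Function.Periodic γ' (2 * π) →
        Function.Periodic γ'' (2 * π) →
        (∀ a b : ℝ, IntervalIntegrable γ' volume a b) →
        (∀ a b : ℝ, IntervalIntegrable γ'' volume a b) →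
        (∀ a b : ℝ, γ b - γ a = ∫ x in a..b, γ' x) →
        (∀ a b : ℝ, γ' b - γ' a = ∫ x in a..b, γ'' x) →
        MemLp γ'' 2 (volume.restrict (Set.Ioc (-π) π)) →
        Summable (fun k : ℤ => |(k : ℝ)| ^ 4 * ∑ i, ‖fcE γ k i‖ ^ 2) →
        (∀ k : ℤ, ∀ i : Fin 3,
          Tendsto (fun ε : ℝ => fcE (LpE p ε γ) k i) (nhdsWithin 0 (Set.Ioi 0))
            (nhds ((lam k : ℂ) * fcE γ k i))) ∧
        Summable (fun k : ℤ =>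
          |(k : ℝ)| ^ (2 * (1 - 2 * p)) * ∑ i, ‖(lam k : ℂ) * fcE γ k i‖ ^ 2) ∧
        (∑' k : ℤ, |(k : ℝ)| ^ (2 * (1 - 2 * p)) * ∑ i, ‖(lam k : ℂ) * fcE γ k i‖ ^ 2) ≤
          Cp ^ 2 * ∑' k : ℤ, |(k : ℝ)| ^ 4 * ∑ i, ‖fcE γ k i‖ ^ 2 := by
  have h2p : (0:ℝ) < 1 - 2 * p := by linarith
  have h2p' : (0:ℝ) < 1 + 2 * p := by linarith
  set B : ℝ := 1 / (1 - 2 * p) + 4 / (1 + 2 * p) with hB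
  have hBpos : 0 < B := by positivity
  refine ⟨lam p, B, B, hBpos, hBpos, fun k hk => ⟨lam_pos hp0 hp hk, lam_le hp0 hp hk⟩, ?_⟩
  intro γ γ' γ'' hγper hγ'per hγ''per hγ'int hγ''int hFTC hFTC' hL2 hsum
  -- continuity of γ
  have hγc : Continuous γ := by
    have hfun : γ = fun b => γ 0 + ∫ x in (0:ℝ)..b, γ' x := by
      funext b
      rw [← hFTC 0 b]
      abel
    rw [hfun]
    exact continuous_const.add (intervalIntegral.continuous_primitive hγ'int 0)
  -- termwise bound
  have hkey : ∀ k : ℤ, |(k : ℝ)| ^ (2 * (1 - 2 * p)) * ∑ i, ‖((lam p k : ℝ) : ℂ) * fcE γ k i‖ ^ 2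
      ≤ B ^ 2 * (|(k : ℝ)| ^ 4 * ∑ i, ‖fcE γ k i‖ ^ 2) := by
    intro k
    rcases eq_or_ne k 0 with rfl | hk
    · have h0 : (0:ℝ) ≤ B ^ 2 * (|((0:ℤ):ℝ)| ^ 4 * ∑ i, ‖fcE γ 0 i‖ ^ 2) := by positivity
      simpa [lam_zero] using h0
    · have hkpos : (0:ℝ) < |(k:ℝ)| := by
        rw [abs_pos, Int.cast_ne_zero]
        exact hk
      have hnorm : ∀ i : Fin 3, ‖((lam p k : ℝ) : ℂ) * fcE γ k i‖ ^ 2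
          = (lam p k) ^ 2 * ‖fcE γ k i‖ ^ 2 := by
        intro i
        rw [norm_mul, Complex.norm_real, Real.norm_eq_abs, mul_pow, sq_abs]
      simp_rw [hnorm]
      rw [← Finset.mul_sum]
      have hlam2 : (lam p k) ^ 2 ≤ B ^ 2 * |(k:ℝ)| ^ (2 * (1 + 2 * p)) := by
        have h1 := lam_le hp0 hp hk
        have h2 := (lam_pos hp0 hp hk).le
        calc (lam p k) ^ 2 ≤ (B * |(k:ℝ)| ^ (1 + 2*p)) ^ 2 := by
              apply pow_le_pow_left₀ h2 h1
          _ = B ^ 2 * (|(k:ℝ)| ^ (1 + 2*p)) ^ 2 := by ring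
          _ = B ^ 2 * |(k:ℝ)| ^ (2 * (1 + 2 * p)) := by
              rw [sq (|(k:ℝ)| ^ (1 + 2*p)), ← Real.rpow_add hkpos]
              congr 2
              ring
      have hrw : |(k : ℝ)| ^ (2 * (1 - 2 * p)) * |(k:ℝ)| ^ (2 * (1 + 2 * p))
          = |(k : ℝ)| ^ (4:ℕ) := by
        rw [← Real.rpow_add hkpos, ← Real.rpow_natCast |(k:ℝ)| 4]
        congr 1
        push_cast
        ring
      have hSS : (0:ℝ) ≤ ∑ i, ‖fcE γ k i‖ ^ 2 := by positivity
      calc |(k : ℝ)| ^ (2 * (1 - 2 * p)) * ((lam p k) ^ 2 * ∑ i, ‖fcE γ k i‖ ^ 2)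
          ≤ |(k : ℝ)| ^ (2 * (1 - 2 * p))
            * (B ^ 2 * |(k:ℝ)| ^ (2 * (1 + 2 * p)) * ∑ i, ‖fcE γ k i‖ ^ 2) := by
            have h0 : (0:ℝ) ≤ |(k : ℝ)| ^ (2 * (1 - 2 * p)) := Real.rpow_nonneg (abs_nonneg _) _
            apply mul_le_mul_of_nonneg_left _ h0
            exact mul_le_mul_of_nonneg_right hlam2 hSS
        _ = B ^ 2 * ((|(k : ℝ)| ^ (2 * (1 - 2 * p)) * |(k:ℝ)| ^ (2 * (1 + 2 * p)))
            * ∑ i, ‖fcE γ k i‖ ^ 2) := by ring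
        _ = B ^ 2 * (|(k : ℝ)| ^ 4 * ∑ i, ‖fcE γ k i‖ ^ 2) := by rw [hrw]
  have hnn : ∀ k : ℤ,
      0 ≤ |(k : ℝ)| ^ (2 * (1 - 2 * p)) * ∑ i, ‖((lam p k : ℝ) : ℂ) * fcE γ k i‖ ^ 2 := by
    intro k
    positivity
  have hsum2 : Summable (fun k : ℤ =>
      |(k : ℝ)| ^ (2 * (1 - 2 * p)) * ∑ i, ‖((lam p k : ℝ) : ℂ) * fcE γ k i‖ ^ 2) :=
    Summable.of_nonneg_of_le hnn hkey (hsum.mul_left _)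
  refine ⟨?_, hsum2, ?_⟩
  · intro k i
    have hEq : (fun ε : ℝ => ((lamE p ε k : ℝ) : ℂ) * fcE γ k i)
        =ᶠ[nhdsWithin 0 (Set.Ioi 0)] (fun ε : ℝ => fcE (LpE p ε γ) k i) := by
      filter_upwards [self_mem_nhdsWithin] with ε hε
      rw [fc_LpE hp0 hε hγc hγper k i, mC_real hp0 hε k]
    have hT : Tendsto (fun ε : ℝ => ((lamE p ε k : ℝ) : ℂ) * fcE γ k i)
        (nhdsWithin 0 (Set.Ioi 0)) (nhds (((lam p k : ℝ) : ℂ) * fcE γ k i)) :=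
      ((Complex.continuous_ofReal.tendsto _).comp (lamE_tendsto hp0 hp k)).mul_const _
    exact hT.congr' hEq
  · calc (∑' k : ℤ, |(k : ℝ)| ^ (2 * (1 - 2 * p)) * ∑ i, ‖((lam p k : ℝ) : ℂ) * fcE γ k i‖ ^ 2)
        ≤ ∑' k : ℤ, B ^ 2 * (|(k : ℝ)| ^ 4 * ∑ i, ‖fcE γ k i‖ ^ 2) :=
          Summable.tsum_le_tsum hkey hsum2 (hsum.mul_left _)
      _ = B ^ 2 * ∑' k : ℤ, |(k : ℝ)| ^ 4 * ∑ i, ‖fcE γ k i‖ ^ 2 := tsum_mul_left
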